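/- Let Q_d be the hypercube on {0,1}^d with bipartition classes E and O, each of size 2^{d−1}. For integers t and f with 0 ≤ f < t/2 and f·d ≤ 2^{d−1} − t, the number of independent sets of size t in Q_d satisfies i_t(Q_d) ≥ 2 · Σ_A C(2^{d−1} − d|A|, t − |A|), where the sum is over all sets A ⊆ E with |A| ≤ f such that no two vertices of A have a common neighbour (i.e. cl(A) ≤ 1). -/

import Mathlib

open Finset

/-- The discrete hypercube `Q_d`. -/
def cube (d : ℕ) : SimpleGraph (Fin d → Bool) where
  Adj x y := (Finset.univ.filter fun i => x i ≠ y i).card = 1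
  symm := by
    constructor
    intro x y h
    simpa [ne_comm] using h
  loopless := by
    constructor
    intro x h
    simp at h

instance (d : ℕ) : DecidableRel (cube d).Adj := fun _ _ => by
  unfold cube
  infer_instance

/-- Number of independent sets of size `t`. -/
def numIndep {V : Type*} [Fintype V] [DecidableEq V] (G : SimpleGraph V)
    [DecidableRel G.Adj] (t : ℕ) : ℕ :=
  (Finset.univ.powerset.filter
    (fun s : Finset V => s.card = t ∧ ∀ u ∈ s, ∀ v ∈ s, ¬ G.Adj u v)).card

/-- A vertex of the hypercube has even weight. -/
def evenWt {d : ℕ} (x : Fin d → Bool) : Prop :=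
  (Finset.univ.filter fun i => x i = true).card % 2 = 0

instance {d : ℕ} : DecidablePred (evenWt (d := d)) := fun _ => by
  unfold evenWt
  infer_instance

/-- The even bipartition class of `Q_d`. -/
def evenClass (d : ℕ) : Finset (Fin d → Bool) := Finset.univ.filter evenWt

/-- No two vertices of `A` have a common neighbour (i.e. `cl(A) ≤ 1`). -/
def noCommonNbr (d : ℕ) (A : Finset (Fin d → Bool)) : Prop :=
  ∀ x ∈ A, ∀ y ∈ A, x ≠ y → ∀ w, ¬ ((cube d).Adj w x ∧ (cube d).Adj w y)

instance (d : ℕ) (A : Finset (Fin d → Bool)) : Decidable (noCommonNbr d A) := by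
  unfold noCommonNbr
  infer_instance


namespace Stmt19

variable {d : ℕ}

lemma cube_adj {x y : Fin d → Bool} :
    (cube d).Adj x y ↔ (Finset.univ.filter fun i => x i ≠ y i).card = 1 := Iff.rfl

def flp (i : Fin d) (x : Fin d → Bool) : Fin d → Bool := Function.update x i (!x i)

lemma flp_same (i : Fin d) (x : Fin d → Bool) : flp i x i = !x i :=
  Function.update_self _ _ _

lemma flp_ne {i j : Fin d} (h : j ≠ i) (x : Fin d → Bool) : flp i x j = x j :=
  Function.update_of_ne h _ _

lemma flp_flp (i : Fin d) (x : Fin d → Bool) : flp i (flp i x) = x := by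
  funext j
  by_cases h : j = i
  · subst h; simp [flp]
  · rw [flp_ne h, flp_ne h]

lemma flp_inj (i : Fin d) : Function.Injective (flp i) :=
  Function.Involutive.injective (flp_flp i)

lemma adj_iff {x y : Fin d → Bool} : (cube d).Adj x y ↔ ∃ i, y = flp i x := by
  rw [cube_adj]
  constructor
  · intro h
    obtain ⟨i, hi⟩ := Finset.card_eq_one.mp h
    refine ⟨i, ?_⟩
    funext j
    by_cases hj : j = i
    · subst hj
      have hji : j ∈ Finset.univ.filter fun i => x i ≠ y i := by
        rw [hi]; exact Finset.mem_singleton_self j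
      have : x j ≠ y j := (Finset.mem_filter.mp hji).2
      rw [flp_same]
      cases hx : x j <;> cases hy : y j <;> simp_all
    · have hji : j ∉ Finset.univ.filter fun i => x i ≠ y i := by
        rw [hi]; simpa using hj
      have : ¬ x j ≠ y j := by
        intro hne; exact hji (Finset.mem_filter.mpr ⟨Finset.mem_univ _, hne⟩)
      rw [flp_ne hj]
      exact ((by simpa using this : x j = y j)).symm
  · rintro ⟨i, rfl⟩
    have : (Finset.univ.filter fun j => x j ≠ flp i x j) = {i} := by
      ext j
      simp only [Finset.mem_filter, Finset.mem_univ, true_and, Finset.mem_singleton]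
      by_cases hj : j = i
      · subst hj; simp [flp_same]
      · simp [flp_ne hj, hj]
    rw [this, Finset.card_singleton]

lemma adj_flp (i : Fin d) (x : Fin d → Bool) : (cube d).Adj x (flp i x) :=
  adj_iff.mpr ⟨i, rfl⟩

/-- parity in `ZMod 2` -/
def par (x : Fin d → Bool) : ZMod 2 := ∑ i, if x i then 1 else 0

lemma par_eq (x : Fin d → Bool) :
    par x = ((Finset.univ.filter fun i => x i = true).card : ZMod 2) := by
  rw [par, Finset.sum_boole]

lemma evenWt_iff {x : Fin d → Bool} : evenWt x ↔ par x = 0 := by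
  rw [par_eq, ZMod.natCast_eq_zero_iff, evenWt, Nat.dvd_iff_mod_eq_zero]

lemma adj_par {x y : Fin d → Bool} (h : (cube d).Adj x y) : par x + par y = 1 := by
  have : par x + par y =
      ∑ i, ((if x i then (1 : ZMod 2) else 0) + (if y i then 1 else 0)) := by
    rw [par, par, Finset.sum_add_distrib]
  rw [this]
  have h2 : ∀ i, ((if x i then (1 : ZMod 2) else 0) + (if y i then 1 else 0)) =
      (if x i ≠ y i then 1 else 0) := by
    intro i
    cases hx : x i <;> cases hy : y i <;> simp <;> decide
  rw [Finset.sum_congr rfl fun i _ => h2 i, Finset.sum_boole]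
  rw [cube_adj] at h
  rw [h]
  norm_num

lemma adj_even {x y : Fin d → Bool} (h : (cube d).Adj x y) :
    evenWt x ↔ ¬ evenWt y := by
  have hp := adj_par h
  rw [evenWt_iff, evenWt_iff]
  have : ∀ a b : ZMod 2, a + b = 1 → (a = 0 ↔ ¬ b = 0) := by decide
  exact this _ _ hp

lemma even_flp (i : Fin d) (x : Fin d → Bool) : evenWt (flp i x) ↔ ¬ evenWt x := by
  have := adj_even (adj_flp i x)
  by_cases h : evenWt x <;> by_cases h2 : evenWt (flp i x) <;> tauto

/-- the odd class -/
def oddClass (d : ℕ) : Finset (Fin d → Bool) :=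
  Finset.univ.filter fun x => ¬ evenWt x

lemma card_even_add_odd : (evenClass d).card + (oddClass d).card = 2 ^ d := by
  rw [evenClass, oddClass, Finset.card_filter_add_card_filter_not]
  simp [Finset.card_univ]

lemma card_even_eq_odd (hd : 1 ≤ d) : (evenClass d).card = (oddClass d).card := by
  have i0 : Fin d := ⟨0, hd⟩
  refine Finset.card_bij' (fun a _ => flp i0 a) (fun b _ => flp i0 b) ?_ ?_ ?_ ?_
  · intro a ha
    rw [evenClass, Finset.mem_filter] at ha
    rw [oddClass, Finset.mem_filter]
    refine ⟨Finset.mem_univ _, ?_⟩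
    rw [even_flp]
    exact fun hc => hc ha.2
  · intro b hb
    rw [oddClass, Finset.mem_filter] at hb
    rw [evenClass, Finset.mem_filter]
    refine ⟨Finset.mem_univ _, ?_⟩
    by_contra hc
    rw [even_flp] at hc
    exact hc (fun h => hb.2 h)
  · intro a _; exact flp_flp i0 a
  · intro b _; exact flp_flp i0 b

lemma card_evenClass (hd : 1 ≤ d) : (evenClass d).card = 2 ^ (d - 1) := by
  have h1 := card_even_add_odd (d := d)
  have h2 := card_even_eq_odd (d := d) hd
  have h3 : 2 ^ d = 2 * 2 ^ (d - 1) := by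
    conv_lhs => rw [show d = (d - 1) + 1 by omega]
    ring
  omega

lemma card_oddClass (hd : 1 ≤ d) : (oddClass d).card = 2 ^ (d - 1) := by
  have h1 := card_even_add_odd (d := d)
  have := card_evenClass (d := d) hd
  have h3 : 2 ^ d = 2 * 2 ^ (d - 1) := by
    conv_lhs => rw [show d = (d - 1) + 1 by omega]
    ring
  omega

/-- neighbourhood as a finset -/
def nbhd (d : ℕ) (a : Fin d → Bool) : Finset (Fin d → Bool) :=
  Finset.univ.filter fun w => (cube d).Adj w a

lemma mem_nbhd {a w : Fin d → Bool} : w ∈ nbhd d a ↔ (cube d).Adj w a := by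
  rw [nbhd, Finset.mem_filter]; simp

lemma card_nbhd (a : Fin d → Bool) : (nbhd d a).card = d := by
  have himg : nbhd d a = Finset.univ.image fun i => flp i a := by
    ext w
    rw [mem_nbhd, Finset.mem_image, (cube d).adj_comm, adj_iff]
    simp [eq_comm]
  rw [himg, Finset.card_image_of_injective _ ?_, Finset.card_univ, Fintype.card_fin]
  intro i j hij
  by_contra hne
  have h2 : flp i a i = flp j a i := congrFun hij i
  rw [flp_same, flp_ne hne] at h2
  simp at h2

/-- neighbourhood of a set -/
def NA (d : ℕ) (A : Finset (Fin d → Bool)) : Finset (Fin d → Bool) :=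
  A.biUnion (nbhd d)

lemma card_NA {A : Finset (Fin d → Bool)} (h : noCommonNbr d A) :
    (NA d A).card = d * A.card := by
  rw [NA, Finset.card_biUnion, Finset.sum_congr rfl fun a _ => card_nbhd a,
    Finset.sum_const, smul_eq_mul, mul_comm]
  intro x hx y hy hxy
  rw [Function.onFun, Finset.disjoint_left]
  intro w hwx hwy
  exact h x hx y hy hxy w ⟨mem_nbhd.mp hwx, mem_nbhd.mp hwy⟩

lemma NA_subset_odd {A : Finset (Fin d → Bool)} (hA : A ⊆ evenClass d) :
    NA d A ⊆ oddClass d := by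
  intro w hw
  rw [NA, Finset.mem_biUnion] at hw
  obtain ⟨a, ha, hwa⟩ := hw
  have haE : evenWt a := (Finset.mem_filter.mp (hA ha)).2
  have hadj := mem_nbhd.mp hwa
  rw [oddClass, Finset.mem_filter]
  refine ⟨Finset.mem_univ _, ?_⟩
  intro hwE
  exact (adj_even hadj).mp hwE haE


lemma adj_flp_iff (i : Fin d) {x y : Fin d → Bool} :
    (cube d).Adj (flp i x) (flp i y) ↔ (cube d).Adj x y := by
  rw [cube_adj, cube_adj]
  have h : (Finset.univ.filter fun j => flp i x j ≠ flp i y j) =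
      Finset.univ.filter fun j => x j ≠ y j := by
    apply Finset.filter_congr
    intro j _
    by_cases hj : j = i
    · subst hj
      rw [flp_same, flp_same]
      cases x j <;> cases y j <;> simp
    · rw [flp_ne hj, flp_ne hj]
  rw [h]

end Stmt19

open Stmt19
theorem stmt_19 (d t f : ℕ) (hd : 1 ≤ d) (hf : 2 * f < t) (hfd : f * d + t ≤ 2 ^ (d - 1)) :
    2 * ∑ A ∈ (evenClass d).powerset.filter
          (fun A => A.card ≤ f ∧ noCommonNbr d A),
        Nat.choose (2 ^ (d - 1) - d * A.card) (t - A.card) ≤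
      numIndep (cube d) t := by
  classical
  set idx := (evenClass d).powerset.filter (fun A => A.card ≤ f ∧ noCommonNbr d A) with hidx
  set I := (Finset.univ.powerset.filter
      (fun s : Finset (Fin d → Bool) =>
        s.card = t ∧ ∀ u ∈ s, ∀ v ∈ s, ¬ (cube d).Adj u v)) with hI
  set F1 := I.filter (fun S => (S.filter evenWt).card ≤ f) with hF1
  set F2 := I.filter (fun S => (S.filter fun x => ¬ evenWt x).card ≤ f) with hF2
  set G : Finset (Fin d → Bool) → Finset (Finset (Fin d → Bool)) :=
    fun A => ((oddClass d \ NA d A).powersetCard (t - A.card)).image (fun B => A ∪ B) with hG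
  have hidxmem : ∀ A ∈ idx, A ⊆ evenClass d ∧ A.card ≤ f ∧ noCommonNbr d A := by
    intro A hA
    rw [hidx, Finset.mem_filter, Finset.mem_powerset] at hA
    exact ⟨hA.1, hA.2.1, hA.2.2⟩
  have hevenA : ∀ A : Finset (Fin d → Bool), A ⊆ evenClass d → ∀ a ∈ A, evenWt a :=
    fun A hA a ha => (Finset.mem_filter.mp (hA ha)).2
  have hoddB : ∀ A : Finset (Fin d → Bool),
      ∀ B ∈ (oddClass d \ NA d A).powersetCard (t - A.card), ∀ b ∈ B, ¬ evenWt b := by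
    intro A B hB b hb
    have hsub := (Finset.mem_powersetCard.mp hB).1
    have := Finset.mem_sdiff.mp (hsub hb)
    exact (Finset.mem_filter.mp this.1).2
  have hkey : ∀ A ∈ idx, ∀ B ∈ (oddClass d \ NA d A).powersetCard (t - A.card),
      Disjoint A B ∧ (A ∪ B).filter evenWt = A ∧ (A ∪ B).card = t := by
    intro A hA B hB
    obtain ⟨hAE, hAf, _⟩ := hidxmem A hA
    have hdisj : Disjoint A B := by
      rw [Finset.disjoint_left]
      intro a haA haB
      exact hoddB A B hB a haB (hevenA A hAE a haA)
    have hBcard : B.card = t - A.card := (Finset.mem_powersetCard.mp hB).2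
    refine ⟨hdisj, ?_, ?_⟩
    · rw [Finset.filter_union, Finset.filter_true_of_mem (hevenA A hAE),
        Finset.filter_false_of_mem (hoddB A B hB), Finset.union_empty]
    · rw [Finset.card_union_of_disjoint hdisj, hBcard]
      omega
  have hGcard : ∀ A ∈ idx,
      (G A).card = Nat.choose (2 ^ (d - 1) - d * A.card) (t - A.card) := by
    intro A hA
    obtain ⟨hAE, hAf, hAnc⟩ := hidxmem A hA
    rw [hG]
    rw [Finset.card_image_of_injOn ?inj, Finset.card_powersetCard]
    · congr 1
      rw [Finset.card_sdiff_of_subset (NA_subset_odd hAE), card_oddClass hd, card_NA hAnc]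
    case inj =>
      intro B1 h1 B2 h2 he
      have d1 := (hkey A hA B1 h1).1
      have d2 := (hkey A hA B2 h2).1
      calc B1 = (A ∪ B1) \ A := (Finset.union_sdiff_cancel_left d1).symm
        _ = (A ∪ B2) \ A := by rw [show A ∪ B1 = A ∪ B2 from he]
        _ = B2 := Finset.union_sdiff_cancel_left d2
  have hGfil : ∀ A ∈ idx, ∀ S ∈ G A, S.filter evenWt = A := by
    intro A hA S hS
    rw [hG] at hS
    obtain ⟨B, hB, rfl⟩ := Finset.mem_image.mp hS
    exact (hkey A hA B hB).2.1
  have hGsubF1 : ∀ A ∈ idx, G A ⊆ F1 := by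
    intro A hA S hS
    have hfil := hGfil A hA S hS
    rw [hG] at hS
    obtain ⟨B, hB, rfl⟩ := Finset.mem_image.mp hS
    obtain ⟨hdisj, _, hcard⟩ := hkey A hA B hB
    obtain ⟨hAE, hAf, _⟩ := hidxmem A hA
    have hBodd : B ⊆ oddClass d \ NA d A := (Finset.mem_powersetCard.mp hB).1
    rw [hF1, Finset.mem_filter, hI, Finset.mem_filter]
    refine ⟨⟨Finset.mem_powerset.mpr (Finset.subset_univ _), hcard, ?_⟩,
      by rw [hfil]; exact hAf⟩
    intro u hu v hv hadj
    rcases Finset.mem_union.mp hu with huA | huB <;>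
      rcases Finset.mem_union.mp hv with hvA | hvB
    · exact (adj_even hadj).mp (hevenA A hAE u huA) (hevenA A hAE v hvA)
    · have hvN : v ∈ NA d A :=
        Finset.mem_biUnion.mpr ⟨u, huA, mem_nbhd.mpr hadj.symm⟩
      exact (Finset.mem_sdiff.mp (hBodd hvB)).2 hvN
    · have huN : u ∈ NA d A :=
        Finset.mem_biUnion.mpr ⟨v, hvA, mem_nbhd.mpr hadj⟩
      exact (Finset.mem_sdiff.mp (hBodd huB)).2 huN
    · exact hoddB A B hB u huB ((adj_even hadj).mpr (hoddB A B hB v hvB))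
  have hdisjG : ∀ A1 ∈ idx, ∀ A2 ∈ idx, A1 ≠ A2 → Disjoint (G A1) (G A2) := by
    intro A1 h1 A2 h2 hne
    rw [Finset.disjoint_left]
    intro S hS1 hS2
    exact hne ((hGfil A1 h1 S hS1).symm.trans (hGfil A2 h2 S hS2))
  have h1 : ∑ A ∈ idx, Nat.choose (2 ^ (d - 1) - d * A.card) (t - A.card) ≤ F1.card := by
    have hsum : ∑ A ∈ idx, Nat.choose (2 ^ (d - 1) - d * A.card) (t - A.card)
        = (idx.biUnion G).card := by
      rw [Finset.card_biUnion hdisjG]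
      exact Finset.sum_congr rfl (fun A hA => (hGcard A hA).symm)
    rw [hsum]
    exact Finset.card_le_card (Finset.biUnion_subset.mpr hGsubF1)
  have i0 : Fin d := ⟨0, hd⟩
  have h2 : F1.card ≤ F2.card := by
    apply Finset.card_le_card_of_injOn (fun S => S.image (flp i0))
    · intro S hS
      rw [Finset.mem_coe, hF1, Finset.mem_filter, hI, Finset.mem_filter] at hS
      obtain ⟨⟨_, hcard, hind⟩, hfle⟩ := hS
      rw [Finset.mem_coe, hF2, Finset.mem_filter, hI, Finset.mem_filter]
      refine ⟨⟨Finset.mem_powerset.mpr (Finset.subset_univ _), ?_, ?_⟩, ?_⟩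
      · rw [Finset.card_image_of_injective _ (flp_inj i0)]; exact hcard
      · intro u hu v hv hadj
        obtain ⟨a, ha, rfl⟩ := Finset.mem_image.mp hu
        obtain ⟨b, hb, rfl⟩ := Finset.mem_image.mp hv
        exact hind a ha b hb ((adj_flp_iff i0).mp hadj)
      · have himg : (S.image (flp i0)).filter (fun x => ¬ evenWt x)
            = (S.filter evenWt).image (flp i0) := by
          ext w
          simp only [Finset.mem_filter, Finset.mem_image]
          constructor
          · rintro ⟨⟨a, ha, rfl⟩, hodd⟩
            exact ⟨a, ⟨ha, by_contra fun h => hodd ((even_flp i0 a).mpr h)⟩, rfl⟩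
          · rintro ⟨a, ⟨ha, heva⟩, rfl⟩
            exact ⟨⟨a, ha, rfl⟩, fun h => (even_flp i0 a).mp h heva⟩
        rw [himg, Finset.card_image_of_injective _ (flp_inj i0)]
        exact hfle
    · intro S1 _ S2 _ h
      exact Finset.image_injective (flp_inj i0) h
  have h3 : F1.card + F2.card ≤ numIndep (cube d) t := by
    have hd12 : Disjoint F1 F2 := by
      rw [Finset.disjoint_left]
      intro S hS1 hS2
      rw [hF1, Finset.mem_filter] at hS1
      rw [hF2, Finset.mem_filter] at hS2
      have hcard : S.card = t := (Finset.mem_filter.mp hS1.1).2.1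
      have hsplit := Finset.card_filter_add_card_filter_not
        (s := S) (p := evenWt)
      omega
    have : numIndep (cube d) t = I.card := rfl
    rw [this, ← Finset.card_union_of_disjoint hd12]
    exact Finset.card_le_card
      (Finset.union_subset (Finset.filter_subset _ _) (Finset.filter_subset _ _))
  omega
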